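/- For any two matrices U ∈ ℂ^{m×p} and V ∈ ℂ^{q×m}, one has R(V*) ∩ N(U*V*V) = (V*V)†((R(U) + N(V))⊥), where (V*V)†(S) denotes the image of the subspace S under the linear map given by the matrix (V*V)† and ⊥ denotes orthogonal complement in ℂ^m. -/

import Mathlib

open Matrix

/-- The four Penrose conditions characterizing the Moore-Penrose inverse. -/
def IsMoorePenrose {m n : ℕ} (A : Matrix (Fin m) (Fin n) ℂ)
    (X : Matrix (Fin n) (Fin m) ℂ) : Prop :=
  A * X * A = A ∧ X * A * X = X ∧ (A * X)ᴴ = A * X ∧ (X * A)ᴴ = X * A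

/-- The range (column space) of a matrix, as a subspace of Euclidean space. -/
noncomputable def mrange {m n : ℕ} (A : Matrix (Fin m) (Fin n) ℂ) :
    Submodule ℂ (EuclideanSpace ℂ (Fin m)) :=
  LinearMap.range (Matrix.toEuclideanLin A)

/-- The null space of a matrix, as a subspace of Euclidean space. -/
noncomputable def mker {m n : ℕ} (A : Matrix (Fin m) (Fin n) ℂ) :
    Submodule ℂ (EuclideanSpace ℂ (Fin n)) :=
  LinearMap.ker (Matrix.toEuclideanLin A)

lemma toEuclideanLin_mul {m n k : ℕ} (A : Matrix (Fin m) (Fin n) ℂ)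
    (B : Matrix (Fin n) (Fin k) ℂ) :
    Matrix.toEuclideanLin (A * B) =
      (Matrix.toEuclideanLin A).comp (Matrix.toEuclideanLin B) := by
  ext x
  simp [Matrix.toEuclideanLin_apply, Matrix.mulVec_mulVec]

lemma ker_adjoint_eq {m n : ℕ}
    (f : EuclideanSpace ℂ (Fin m) →ₗ[ℂ] EuclideanSpace ℂ (Fin n)) :
    LinearMap.ker (LinearMap.adjoint f) = (LinearMap.range f)ᗮ := by
  ext x
  constructor
  · intro hx
    rw [Submodule.mem_orthogonal]
    rintro _ ⟨y, rfl⟩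
    rw [← LinearMap.adjoint_inner_right]
    simp [LinearMap.mem_ker.mp hx]
  · intro hx
    rw [LinearMap.mem_ker, ← inner_self_eq_zero (𝕜 := ℂ)]
    rw [LinearMap.adjoint_inner_right]
    exact hx _ ⟨_, rfl⟩

lemma range_adjoint_eq {m n : ℕ}
    (f : EuclideanSpace ℂ (Fin m) →ₗ[ℂ] EuclideanSpace ℂ (Fin n)) :
    LinearMap.range (LinearMap.adjoint f) = (LinearMap.ker f)ᗮ := by
  conv_lhs => rw [← Submodule.orthogonal_orthogonal (LinearMap.range (LinearMap.adjoint f))]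
  rw [← ker_adjoint_eq, LinearMap.adjoint_adjoint]

/-- For any matrices `U ∈ ℂ^{m×p}` and `V ∈ ℂ^{q×m}`,
`R(V*) ∩ N(U*V*V) = (V*V)†((R(U) + N(V))⊥)`. -/
theorem stmt12 {m p q : ℕ} (U : Matrix (Fin m) (Fin p) ℂ) (V : Matrix (Fin q) (Fin m) ℂ)
    (W : Matrix (Fin m) (Fin m) ℂ) (hW : IsMoorePenrose (Vᴴ * V) W) :
    mrange Vᴴ ⊓ mker (Uᴴ * Vᴴ * V) =
      Submodule.map (Matrix.toEuclideanLin W) ((mrange U ⊔ mker V)ᗮ) := by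
  obtain ⟨h1, h2, h3, h4⟩ := hW
  set f := Matrix.toEuclideanLin V with hf
  set u := Matrix.toEuclideanLin U with hu
  set a := Matrix.toEuclideanLin (Vᴴ * V) with ha
  set w := Matrix.toEuclideanLin W with hw
  -- basic facts
  have haf : a = (LinearMap.adjoint f).comp f := by
    rw [ha, toEuclideanLin_mul, Matrix.toEuclideanLin_conjTranspose_eq_adjoint]
  have hasa : LinearMap.adjoint a = a := by
    rw [← Matrix.toEuclideanLin_conjTranspose_eq_adjoint, conjTranspose_mul,
      conjTranspose_conjTranspose]
  -- ker a = ker f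
  have hker : LinearMap.ker a = LinearMap.ker f := by
    ext x
    simp only [LinearMap.mem_ker]
    constructor
    · intro hx
      rw [← inner_self_eq_zero (𝕜 := ℂ)]
      have : (inner ℂ x (a x) : ℂ) = 0 := by rw [hx]; simp
      rwa [haf, LinearMap.comp_apply, LinearMap.adjoint_inner_right] at this
    · intro hx
      rw [haf, LinearMap.comp_apply, hx, map_zero]
  -- range (adjoint f) = range a
  have hra : LinearMap.range (Matrix.toEuclideanLin Vᴴ) = LinearMap.range a := by
    rw [Matrix.toEuclideanLin_conjTranspose_eq_adjoint, range_adjoint_eq, ← hker,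
      ← range_adjoint_eq, hasa]
  -- Penrose conditions in linear map form
  have p1 : a.comp (w.comp a) = a := by
    rw [← toEuclideanLin_mul, ← toEuclideanLin_mul, ← mul_assoc, h1]
  have p2 : w.comp (a.comp w) = w := by
    rw [← toEuclideanLin_mul, ← toEuclideanLin_mul, ← mul_assoc, h2]
  have p4 : LinearMap.adjoint (w.comp a) = w.comp a := by
    rw [← toEuclideanLin_mul, ← Matrix.toEuclideanLin_conjTranspose_eq_adjoint, h4]
  -- wa: range a fixed points analysis
  have hkerwa : LinearMap.ker (w.comp a) = LinearMap.ker a := by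
    apply le_antisymm
    · intro x hx
      have : a (w (a x)) = a x := LinearMap.congr_fun p1 x
      rw [LinearMap.mem_ker] at hx ⊢
      rw [← this]
      show a ((w ∘ₗ a) x) = 0
      rw [hx, map_zero]
    · intro x hx
      rw [LinearMap.mem_ker] at hx ⊢
      rw [LinearMap.comp_apply, hx, map_zero]
  have hrangewa : LinearMap.range (w.comp a) = LinearMap.range a := by
    have := range_adjoint_eq (w.comp a)
    rw [p4, hkerwa, hker] at this
    rw [this, ← hker, ← range_adjoint_eq, hasa]
  -- w∘a is identity on range a
  have hfix : ∀ y, y ∈ LinearMap.range a → w (a y) = y := by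
    intro y hy
    rw [← hrangewa] at hy
    obtain ⟨z, rfl⟩ := hy
    have : (w.comp (a.comp w)).comp a = w.comp a := by rw [p2]
    calc w (a ((w.comp a) z)) = ((w.comp (a.comp w)).comp a) z := rfl
    _ = (w.comp a) z := by rw [this]
  -- a∘w is identity on range a
  have hfix2 : ∀ y, y ∈ LinearMap.range a → a (w y) = y := by
    rintro _ ⟨z, rfl⟩
    exact LinearMap.congr_fun p1 z
  -- rewrite the RHS orthogonal complement
  have horth : (mrange U ⊔ mker V)ᗮ
      = LinearMap.ker (LinearMap.adjoint u) ⊓ LinearMap.range a := by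
    rw [← Submodule.inf_orthogonal, mrange, mker, ker_adjoint_eq]
    congr 1
    rw [← hf, ← range_adjoint_eq, ← Matrix.toEuclideanLin_conjTranspose_eq_adjoint, hra]
  have hkerUaa : mker (Uᴴ * Vᴴ * V) = LinearMap.ker ((LinearMap.adjoint u).comp a) := by
    rw [mker, Matrix.mul_assoc, toEuclideanLin_mul, Matrix.toEuclideanLin_conjTranspose_eq_adjoint,
      ← ha]
  rw [horth, hkerUaa, mrange, hra]
  ext y
  simp only [Submodule.mem_inf, Submodule.mem_map, LinearMap.mem_ker, LinearMap.mem_range,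
    LinearMap.comp_apply]
  constructor
  · rintro ⟨hy1, hy2⟩
    refine ⟨a y, ⟨hy2, ⟨y, rfl⟩⟩, hfix y hy1⟩
  · rintro ⟨x, ⟨hx1, hx2⟩, rfl⟩
    constructor
    · obtain ⟨z, rfl⟩ := hx2
      have : w (a z) ∈ LinearMap.range a := hrangewa ▸ LinearMap.mem_range_self (w.comp a) z
      exact this
    · rw [hfix2 x hx2, hx1]
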